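/- Let 0 ≤ λ ≤ λ_1 ≤ 1/2 with λ ≥ 0.06963, and set μ = sqrt(λ(1-λ)), μ_1 = sqrt(λ_1(1-λ_1)). Let A' be the N×N matrix whose first column is (λ_1, μ_1, 0, ..., 0)^T, whose first row is (λ_1, λμ_1, λμμ_1, λμ²μ_1, ..., λμ^{N-2}μ_1), and whose remaining entries satisfy A'_{ij} = λμ^{i-j} for 2 ≤ j ≤ i, A'_{ij} = μ for i = j-1 ≥ 2, and A'_{ij} = 0 for i < j-1. Then the spectral radius of A' is at most max( (1+sqrt(1-λ))²λ, λ_1 + (1+sqrt(1-λ))·sqrt((1-λ_1)λλ_1) ). -/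

import Mathlib

open scoped ENNReal NNReal

open Finset in
private lemma geom_le19 {r : ℝ} (h0 : 0 ≤ r) (h1 : r < 1) (n : ℕ) :
    ∑ k ∈ range n, r ^ k ≤ 1 / (1 - r) := by
  rw [le_div_iff₀ (by linarith)]
  have h : (∑ k ∈ range n, r ^ k) * (1 - r) = 1 - r ^ n := by
    linear_combination -(geom_sum_mul r n)
  rw [h]
  have : 0 ≤ r ^ n := pow_nonneg h0 n
  linarith

set_option maxHeartbeats 1000000 in
private lemma crux_aux19 (s t : ℝ) (hs0 : 0 < s) (ht0 : 0 < t) (hst : s^2+t^2=1)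
    (hlow : 0.06963 ≤ s^2) (hhalf : s^2 ≤ 1/2) :
    1 ≤ 2*s*t*(1+t)^2*(1 - s^2*t*(1+t)) := by
  have ht_lo : 0.7071 ≤ t := by nlinarith
  have ht_hi : t ≤ 0.96457 := by nlinarith
  have hx : (0:ℝ) ≤ t - 0.7071 := by linarith
  have hy : (0:ℝ) ≤ 0.96457 - t := by linarith
  have hsq : (1.924 - 1.722*t)^2 ≤ s^2 := by nlinarith [mul_nonneg hx hy]
  have hlb : 1.924 - 1.722*t ≤ s := by nlinarith [hsq, hs0]
  have hp : 0 ≤ 1 - (1-t^2)*t*(1+t) := by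
    nlinarith [mul_nonneg hx hy, mul_nonneg (mul_nonneg hx hx) hy, mul_nonneg hx (mul_nonneg hy hy)]
  have hfac : 0 ≤ 2*t*(1+t)^2*(1 - (1-t^2)*t*(1+t)) := by
    have h2 : (0:ℝ) ≤ 2*t*(1+t)^2 := by positivity
    exact mul_nonneg h2 hp
  have hQ : 1 ≤ (1.924 - 1.722*t) * (2*t*(1+t)^2*(1 - (1-t^2)*t*(1+t))) := by
    nlinarith [hx, hy, mul_nonneg hx hy, mul_nonneg (mul_nonneg hx hx) hy,
      mul_nonneg (pow_nonneg hx 3) hy, mul_nonneg (pow_nonneg hx 4) hy,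
      mul_nonneg (pow_nonneg hx 5) hy, mul_nonneg (pow_nonneg hx 6) hy,
      mul_nonneg (pow_nonneg hx 7) hy, pow_nonneg hx 8]
  calc (1:ℝ) ≤ (1.924 - 1.722*t) * (2*t*(1+t)^2*(1 - (1-t^2)*t*(1+t))) := hQ
    _ ≤ s * (2*t*(1+t)^2*(1 - (1-t^2)*t*(1+t))) := mul_le_mul_of_nonneg_right hlb hfac
    _ = 2*s*t*(1+t)^2*(1 - s^2*t*(1+t)) := by linear_combination (2*s*t^2*(1+t)^3) * hst

/-- Matrix entry formula as a function on `ℕ`. -/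
noncomputable def Fm19 (lam lam1 mu mu1 : ℝ) (i j : ℕ) : ℝ :=
  if j = 0 then (if i = 0 then lam1 else if i = 1 then mu1 else 0)
  else if i = 0 then lam * mu ^ (j - 1) * mu1
  else if j ≤ i then lam * mu ^ (i - j)
  else if i + 1 = j then mu else 0

/-- Weight vector for the scaled Gershgorin / Perron argument. -/
noncomputable def Vw19 (lam mu q c : ℝ) (j : ℕ) : ℝ :=
  if j = 0 then lam*q*(1-mu^2) else if j = 1 then q^2*(1-mu*q) else c*q^j

private lemma Fm19_nonneg {lam lam1 mu mu1 : ℝ} (h0 : 0 ≤ lam) (h1 : 0 ≤ lam1)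
    (h2 : 0 ≤ mu) (h3 : 0 ≤ mu1) (i j : ℕ) : 0 ≤ Fm19 lam lam1 mu mu1 i j := by
  unfold Fm19
  split_ifs <;> positivity

private lemma Vw19_pos {lam mu q c : ℝ} (h0 : 0 < lam) (h1 : 0 < q) (h2 : 0 < c)
    (h3 : mu^2 < 1) (h4 : mu*q < 1) (j : ℕ) : 0 < Vw19 lam mu q c j := by
  unfold Vw19
  have e1 : 0 < 1 - mu^2 := by linarith
  have e2 : 0 < 1 - mu*q := by linarith
  split_ifs <;> positivity

open Finset in
private lemma key_row19 (lam lam1 mu mu1 s q c R : ℝ)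
    (hs2 : s^2 = lam) (hq : q = s + mu) (hc : c = s*(1-mu*q))
    (hs0 : 0 < s) (hmu0 : 0 < mu) (hmu1_0 : 0 ≤ mu1) (hlam1_0 : 0 ≤ lam1)
    (hmuq : mu*q < 1) (hmu2 : mu^2 < 1)
    (hcrux : lam ≤ 2*mu*q^2*(1-mu*q)) (hmu1h : mu1 ≤ 1/2)
    (hRq : q^2 ≤ R) (hRe : lam1 + q*mu1 ≤ R)
    (N : ℕ) (hN : 2 ≤ N) (i : ℕ) :
    ∑ j ∈ range N, Fm19 lam lam1 mu mu1 i j * Vw19 lam mu q c j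
      ≤ R * Vw19 lam mu q c i := by
  have hlam0 : 0 < lam := by nlinarith
  have hq0 : 0 < q := by rw [hq]; linarith
  have h1muq : 0 < 1 - mu*q := by linarith
  have hc0 : 0 < c := by rw [hc]; positivity
  have hVpos := fun j => Vw19_pos hlam0 hq0 hc0 hmu2 hmuq (c := c) (j := j)
  have hFnn := fun i j => Fm19_nonneg hlam0.le hlam1_0 hmu0.le hmu1_0 (lam := lam) (i := i) (j := j)
  match i with
  | 0 =>
    obtain ⟨n, rfl⟩ : ∃ n, N = n + 2 := ⟨N - 2, by omega⟩
    rw [Finset.sum_range_succ' _ (n+1)]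
    have hF00 : Fm19 lam lam1 mu mu1 0 0 = lam1 := by simp [Fm19]
    have hV0 : Vw19 lam mu q c 0 = lam*q*(1-mu^2) := by simp [Vw19]
    have hV1 : Vw19 lam mu q c 1 = q^2*(1-mu*q) := by simp [Vw19]
    have hsum : ∑ k ∈ range (n+1), Fm19 lam lam1 mu mu1 0 (k+1) * Vw19 lam mu q c (k+1)
        ≤ lam*mu1*(q^2*(1-mu*q) + s*mu*q^2) := by
      have e0 : ∀ k ∈ range (n+1), Fm19 lam lam1 mu mu1 0 (k+1) * Vw19 lam mu q c (k+1)
          = lam*mu1*(mu^k * Vw19 lam mu q c (k+1)) := by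
        intro k _
        have : Fm19 lam lam1 mu mu1 0 (k+1) = lam * mu ^ k * mu1 := by simp [Fm19]
        rw [this]; ring
      rw [sum_congr rfl e0, ← mul_sum]
      have hmm : 0 ≤ lam * mu1 := by positivity
      apply mul_le_mul_of_nonneg_left _ hmm
      rw [Finset.sum_range_succ' _ n]
      have e1 : ∀ k ∈ range n, mu^(k+1) * Vw19 lam mu q c (k+1+1) = (c*mu*q^2) * (mu*q)^k := by
        intro k _
        have : Vw19 lam mu q c (k+2) = c*q^(k+2) := by simp [Vw19]
        rw [this, pow_succ, pow_add, mul_pow]; ring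
      rw [sum_congr rfl e1, ← mul_sum, hV1]
      simp only [pow_zero, one_mul]
      have hgeom : ∑ k ∈ range n, (mu*q)^k ≤ 1/(1-mu*q) :=
        geom_le19 (by positivity) hmuq n
      have h2 : c*mu*q^2 * (∑ k ∈ range n, (mu*q)^k) ≤ c*mu*q^2 * (1/(1-mu*q)) :=
        mul_le_mul_of_nonneg_left hgeom (by positivity)
      have heq : c*mu*q^2*(1/(1-mu*q)) = s*mu*q^2 := by
        rw [hc]; field_simp
      linarith
    have hmain : lam*mu1*(q^2*(1-mu*q) + s*mu*q^2) = q*mu1*(lam*q*(1-mu^2)) := by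
      rw [hq]; ring
    have hfin : (lam1 + q*mu1) * (lam*q*(1-mu^2)) ≤ R * (lam*q*(1-mu^2)) := by
      apply mul_le_mul_of_nonneg_right hRe
      have h1mu2 : (0:ℝ) < 1 - mu^2 := by linarith
      positivity
    rw [hV0, hF00]
    linarith
  | 1 =>
    have hzero : ∀ j ∈ range (N+1), j ∉ range 3 → Fm19 lam lam1 mu mu1 1 j * Vw19 lam mu q c j = 0 := by
      intro j _ hj3
      simp only [mem_range, not_lt] at hj3
      have : Fm19 lam lam1 mu mu1 1 j = 0 := by
        unfold Fm19
        rw [if_neg (by omega), if_neg (by omega), if_neg (by omega), if_neg (by omega)]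
      rw [this, zero_mul]
    have hstep1 : ∑ j ∈ range N, Fm19 lam lam1 mu mu1 1 j * Vw19 lam mu q c j
        ≤ ∑ j ∈ range (N+1), Fm19 lam lam1 mu mu1 1 j * Vw19 lam mu q c j := by
      apply sum_le_sum_of_subset_of_nonneg (by simp)
      intro j _ _
      exact mul_nonneg (hFnn 1 j) (hVpos j).le
    have hstep2 : ∑ j ∈ range (N+1), Fm19 lam lam1 mu mu1 1 j * Vw19 lam mu q c j
        = ∑ j ∈ range 3, Fm19 lam lam1 mu mu1 1 j * Vw19 lam mu q c j :=
      (sum_subset (by intro x; simp only [mem_range]; omega) hzero).symm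
    have hexp : ∑ j ∈ range 3, Fm19 lam lam1 mu mu1 1 j * Vw19 lam mu q c j
        = mu1*(lam*q*(1-mu^2)) + lam*(q^2*(1-mu*q)) + mu*(c*q^2) := by
      rw [Finset.sum_range_succ, Finset.sum_range_succ, Finset.sum_range_succ,
        Finset.sum_range_zero]
      have h0 : Fm19 lam lam1 mu mu1 1 0 = mu1 := by simp [Fm19]
      have h1 : Fm19 lam lam1 mu mu1 1 1 = lam := by norm_num [Fm19]
      have h2' : Fm19 lam lam1 mu mu1 1 2 = mu := by norm_num [Fm19]
      have v0 : Vw19 lam mu q c 0 = lam*q*(1-mu^2) := by simp [Vw19]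
      have v1 : Vw19 lam mu q c 1 = q^2*(1-mu*q) := by simp [Vw19]
      have v2 : Vw19 lam mu q c 2 = c*q^2 := by simp [Vw19]
      rw [h0, h1, h2', v0, v1, v2]; ring
    have hkey1 : mu1*(lam*(1-mu^2)) ≤ mu*q^2*(1-mu*q) := by
      nlinarith [mul_pos hlam0 (show (0:ℝ) < 1 - mu^2 by linarith), sq_nonneg mu]
    have hV1 : Vw19 lam mu q c 1 = q^2*(1-mu*q) := by simp [Vw19]
    have hrow : mu1*(lam*q*(1-mu^2)) + lam*(q^2*(1-mu*q)) + mu*(c*q^2)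
        ≤ q^2 * (q^2*(1-mu*q)) := by
      have h := mul_le_mul_of_nonneg_left hkey1 hq0.le
      rw [hc]
      rw [hq, ← hs2] at h ⊢
      nlinarith [h]
    have hfin : q^2 * (q^2*(1-mu*q)) ≤ R * (q^2*(1-mu*q)) := by
      apply mul_le_mul_of_nonneg_right hRq
      positivity
    rw [hV1]
    linarith
  | (m+2) =>
    have hzero : ∀ j ∈ range (N+(m+4)), j ∉ range (m+4) →
        Fm19 lam lam1 mu mu1 (m+2) j * Vw19 lam mu q c j = 0 := by
      intro j _ hj
      simp only [mem_range, not_lt] at hj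
      have : Fm19 lam lam1 mu mu1 (m+2) j = 0 := by
        unfold Fm19
        rw [if_neg (by omega), if_neg (by omega), if_neg (by omega), if_neg (by omega)]
      rw [this, zero_mul]
    have hstep1 : ∑ j ∈ range N, Fm19 lam lam1 mu mu1 (m+2) j * Vw19 lam mu q c j
        ≤ ∑ j ∈ range (N+(m+4)), Fm19 lam lam1 mu mu1 (m+2) j * Vw19 lam mu q c j := by
      apply sum_le_sum_of_subset_of_nonneg (by simp)
      intro j _ _
      exact mul_nonneg (hFnn (m+2) j) (hVpos j).le
    have hstep2 : ∑ j ∈ range (N+(m+4)), Fm19 lam lam1 mu mu1 (m+2) j * Vw19 lam mu q c j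
        = ∑ j ∈ range (m+4), Fm19 lam lam1 mu mu1 (m+2) j * Vw19 lam mu q c j :=
      (sum_subset (by intro x; simp only [mem_range]; omega) hzero).symm
    set f : ℕ → ℝ := fun j => Fm19 lam lam1 mu mu1 (m+2) j * Vw19 lam mu q c j with hf
    set S : ℝ := ∑ k ∈ range (m+1), q^k * mu^(m-k) with hSdef
    have hS : S * (q - mu) = q^(m+1) - mu^(m+1) := by
      have h := geom_sum₂_mul q mu (m+1)
      simpa using h
    have d1 : ∑ j ∈ range (m+4), f j = ∑ j ∈ range (m+3), f j + f (m+3) :=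
      Finset.sum_range_succ f (m+3)
    have d2 : ∑ j ∈ range (m+3), f j = (∑ k ∈ range (m+2), f (k+1)) + f 0 :=
      Finset.sum_range_succ' f (m+2)
    have d3 : ∑ k ∈ range (m+2), f (k+1) = (∑ k ∈ range (m+1), f (k+1+1)) + f (0+1) :=
      Finset.sum_range_succ' (fun k => f (k+1)) (m+1)
    have f0 : f 0 = 0 := by
      show Fm19 lam lam1 mu mu1 (m+2) 0 * Vw19 lam mu q c 0 = 0
      have : Fm19 lam lam1 mu mu1 (m+2) 0 = 0 := by
        unfold Fm19
        rw [if_pos rfl, if_neg (by omega), if_neg (by omega)]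
      rw [this, zero_mul]
    have f1 : f (0+1) = lam*mu^(m+1)*(q^2*(1-mu*q)) := by
      show Fm19 lam lam1 mu mu1 (m+2) 1 * Vw19 lam mu q c 1 = _
      have e1 : Fm19 lam lam1 mu mu1 (m+2) 1 = lam*mu^(m+1) := by
        unfold Fm19
        rw [if_neg (by omega), if_neg (by omega), if_pos (by omega)]
        norm_num
      have e2 : Vw19 lam mu q c 1 = q^2*(1-mu*q) := by simp [Vw19]
      rw [e1, e2]
    have ftop : f (m+3) = mu*(c*q^(m+3)) := by
      show Fm19 lam lam1 mu mu1 (m+2) (m+3) * Vw19 lam mu q c (m+3) = _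
      have e1 : Fm19 lam lam1 mu mu1 (m+2) (m+3) = mu := by
        unfold Fm19
        rw [if_neg (by omega), if_neg (by omega), if_neg (by omega), if_pos (by omega)]
      have e2 : Vw19 lam mu q c (m+3) = c*q^(m+3) := by
        unfold Vw19
        rw [if_neg (by omega), if_neg (by omega)]
      rw [e1, e2]
    have fmid : ∑ k ∈ range (m+1), f (k+1+1) = lam*c*q^2*S := by
      have e : ∀ k ∈ range (m+1), f (k+1+1) = lam*c*q^2*(q^k * mu^(m-k)) := by
        intro k hk
        simp only [mem_range] at hk
        show Fm19 lam lam1 mu mu1 (m+2) (k+2) * Vw19 lam mu q c (k+2) = _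
        have e1 : Fm19 lam lam1 mu mu1 (m+2) (k+2) = lam*mu^(m-k) := by
          unfold Fm19
          rw [if_neg (by omega), if_neg (by omega), if_pos (by omega)]
          have hek : m + 2 - (k + 2) = m - k := by omega
          rw [hek]
        have e2 : Vw19 lam mu q c (k+2) = c*q^(k+2) := by
          unfold Vw19
          rw [if_neg (by omega), if_neg (by omega)]
        rw [e1, e2, pow_add]; ring
      rw [sum_congr rfl e, ← mul_sum, hSdef]
    have htot : ∑ j ∈ range (m+4), f j = lam*mu^(m+1)*(q^2*(1-mu*q)) + lam*c*q^2*S + mu*(c*q^(m+3)) := by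
      rw [d1, d2, d3, f0, f1, ftop, fmid]; ring
    have hid : lam*mu^(m+1)*(q^2*(1-mu*q)) + lam*c*q^2*S + mu*(c*q^(m+3)) = c*q^(m+4) := by
      have hSq : S * ((s+mu) - mu) = (s+mu)^(m+1) - mu^(m+1) := by rw [← hq]; exact hS
      rw [← hs2, hc, hq]
      linear_combination (s*(s*(1-mu*(s+mu)))*(s+mu)^2) * hSq
    have hVi : Vw19 lam mu q c (m+2) = c*q^(m+2) := by
      unfold Vw19
      rw [if_neg (by omega), if_neg (by omega)]
    have hfin : c*q^(m+4) ≤ R * (c*q^(m+2)) := by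
      have : c*q^(m+4) = q^2 * (c*q^(m+2)) := by
        rw [show m+4 = (m+2)+2 by ring, pow_add]; ring
      rw [this]
      apply mul_le_mul_of_nonneg_right hRq
      positivity
    rw [hVi]
    calc ∑ j ∈ range N, f j ≤ ∑ j ∈ range (N+(m+4)), f j := hstep1
      _ = ∑ j ∈ range (m+4), f j := hstep2
      _ = c*q^(m+4) := by rw [htot, hid]
      _ ≤ R * (c*q^(m+2)) := hfin

set_option maxHeartbeats 2000000 in
/-- Gershgorin-type bound for the perturbed staircase block matrix
`A'` whose first gate has eigenvalue `λ₁` instead of `λ`: its spectral radius is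
at most `max((1+√(1-λ))²λ, λ₁ + (1+√(1-λ))·√((1-λ₁)λλ₁))`. -/
theorem stmt_19 {N : ℕ} (hN : 2 ≤ N)
    (lam lam1 : ℝ) (hlow : 0.06963 ≤ lam) (h1 : lam ≤ lam1) (h2 : lam1 ≤ 1 / 2)
    (mu mu1 : ℝ) (hmu : mu = Real.sqrt (lam * (1 - lam)))
    (hmu1 : mu1 = Real.sqrt (lam1 * (1 - lam1)))
    (A : Matrix (Fin N) (Fin N) ℝ)
    (hA : ∀ i j : Fin N, A i j =
      if (j : ℕ) = 0 then
        (if (i : ℕ) = 0 then lam1 else if (i : ℕ) = 1 then mu1 else 0)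
      else if (i : ℕ) = 0 then lam * mu ^ ((j : ℕ) - 1) * mu1
      else if (j : ℕ) ≤ (i : ℕ) then lam * mu ^ ((i : ℕ) - (j : ℕ))
      else if (i : ℕ) + 1 = (j : ℕ) then mu else 0) :
    (⨆ μ' ∈ spectrum ℂ (A.map (fun x : ℝ => (x : ℂ))), (‖μ'‖₊ : ℝ≥0∞))
      ≤ ENNReal.ofReal (max ((1 + Real.sqrt (1 - lam)) ^ 2 * lam)
          (lam1 + (1 + Real.sqrt (1 - lam)) * Real.sqrt ((1 - lam1) * lam * lam1))) := by
  classical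
  have hlam0 : (0:ℝ) < lam := lt_of_lt_of_le (by norm_num) hlow
  have hlamhalf : lam ≤ 1/2 := le_trans h1 h2
  set s := Real.sqrt lam with hs_def
  set t := Real.sqrt (1 - lam) with ht_def
  have hs0 : 0 < s := Real.sqrt_pos.mpr hlam0
  have ht0 : 0 < t := Real.sqrt_pos.mpr (by linarith)
  have hs2 : s^2 = lam := Real.sq_sqrt hlam0.le
  have ht2 : t^2 = 1 - lam := Real.sq_sqrt (by linarith)
  have hmu_st : mu = s * t := by rw [hmu, hs_def, ht_def, ← Real.sqrt_mul hlam0.le]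
  have hmu0 : 0 < mu := by rw [hmu_st]; positivity
  have hst1 : s^2 + t^2 = 1 := by rw [hs2, ht2]; ring
  set q : ℝ := s + mu with hq_def
  have hq0 : 0 < q := by rw [hq_def]; linarith
  have hmusq : mu^2 = lam*(1-lam) := by rw [hmu_st, mul_pow, hs2, ht2]
  have hmu_half : mu ≤ 1/2 := by nlinarith [hmusq, hmu0]
  have hmu2 : mu^2 < 1 := by nlinarith
  have hs_hi : s ≤ 0.7072 := by nlinarith [hs2]
  have hmuq : mu * q < 1 := by
    rw [hq_def]
    nlinarith [mul_le_mul hmu_half hs_hi hs0.le (by norm_num : (0:ℝ) ≤ 1/2)]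
  have hlam1_0 : 0 < lam1 := lt_of_lt_of_le hlam0 h1
  have hmu1sq : mu1^2 = lam1*(1-lam1) := by
    rw [hmu1]; exact Real.sq_sqrt (by nlinarith)
  have hmu1_0 : 0 ≤ mu1 := hmu1 ▸ Real.sqrt_nonneg _
  have hmu1h : mu1 ≤ 1/2 := by nlinarith [hmu1sq]
  have hcrux : lam ≤ 2*mu*q^2*(1-mu*q) := by
    have h := crux_aux19 s t hs0 ht0 hst1 (by rw [hs2]; exact hlow) (by rw [hs2]; exact hlamhalf)
    have e : 2*mu*q^2*(1-mu*q) = s^2*(2*s*t*(1+t)^2*(1-s^2*t*(1+t))) := by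
      rw [hq_def, hmu_st]; ring
    rw [e, ← hs2]
    nlinarith [h, sq_nonneg s]
  set R := max ((1 + t)^2*lam) (lam1 + (1 + t)*Real.sqrt ((1-lam1)*lam*lam1)) with hR_def
  have hRq : q^2 ≤ R := by
    have e : q^2 = (1+t)^2*lam := by rw [hq_def, hmu_st, ← hs2]; ring
    rw [e]; exact le_max_left _ _
  have hsq1 : Real.sqrt ((1-lam1)*lam*lam1) = s * mu1 := by
    rw [show (1-lam1)*lam*lam1 = lam*(lam1*(1-lam1)) by ring, Real.sqrt_mul hlam0.le,
      ← hmu1, ← hs_def]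
  have hRe : lam1 + q*mu1 ≤ R := by
    have e : lam1 + q*mu1 = lam1 + (1+t)*Real.sqrt ((1-lam1)*lam*lam1) := by
      rw [hsq1, hq_def, hmu_st]; ring
    rw [e]; exact le_max_right _ _
  have hR0 : 0 ≤ R := le_trans (sq_nonneg q) hRq
  set c : ℝ := s*(1-mu*q) with hc_def
  have h1muq : 0 < 1 - mu*q := by linarith
  have hc0 : 0 < c := by rw [hc_def]; positivity
  have hVpos : ∀ j : ℕ, 0 < Vw19 lam mu q c j :=
    fun j => Vw19_pos hlam0 hq0 hc0 hmu2 hmuq j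
  have hFnn : ∀ i j : ℕ, 0 ≤ Fm19 lam lam1 mu mu1 i j :=
    fun i j => Fm19_nonneg hlam0.le hlam1_0.le hmu0.le hmu1_0 i j
  have hAF : ∀ i j : Fin N, A i j = Fm19 lam lam1 mu mu1 (i : ℕ) (j : ℕ) :=
    fun i j => (hA i j).trans rfl
  -- main eigenvalue bound
  have key : ∀ μ' ∈ spectrum ℂ (A.map (fun x : ℝ => (x : ℂ))), ‖μ'‖ ≤ R := by
    intro μ' hμ'
    set Ac := A.map (fun x : ℝ => (x : ℂ)) with hAc
    have hspec : μ' ∈ spectrum ℂ (Matrix.toLinAlgEquiv' Ac) := by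
      rwa [AlgEquiv.spectrum_eq]
    have hev : Module.End.HasEigenvalue (Matrix.toLinAlgEquiv' Ac) μ' :=
      Module.End.hasEigenvalue_iff_mem_spectrum.mpr hspec
    obtain ⟨x, hx⟩ := hev.exists_hasEigenvector
    have hxe : Ac.mulVec x = μ' • x := by
      have h2 : Matrix.toLin' Ac x = μ' • x := hx.apply_eq_smul
      rwa [Matrix.toLin'_apply] at h2
    have hNe : (Finset.univ : Finset (Fin N)).Nonempty := ⟨⟨0, by omega⟩, Finset.mem_univ _⟩
    obtain ⟨i, -, hmax⟩ := Finset.exists_max_image Finset.univ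
      (fun j : Fin N => ‖x j‖ / Vw19 lam mu q c (j:ℕ)) hNe
    obtain ⟨j0, hj0⟩ := Function.ne_iff.mp hx.right
    have hxi : 0 < ‖x i‖ := by
      have ha := hmax j0 (Finset.mem_univ _)
      have hb : 0 < ‖x j0‖ / Vw19 lam mu q c (j0:ℕ) :=
        div_pos (norm_pos_iff.mpr hj0) (hVpos _)
      have hcpos : 0 < ‖x i‖ / Vw19 lam mu q c (i:ℕ) := lt_of_lt_of_le hb ha
      have := mul_pos hcpos (hVpos (i:ℕ))
      rwa [div_mul_cancel₀ _ (ne_of_gt (hVpos (i:ℕ)))] at this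
    have hcoord : ∀ j : Fin N,
        ‖x j‖ ≤ (‖x i‖ / Vw19 lam mu q c (i:ℕ)) * Vw19 lam mu q c (j:ℕ) := by
      intro j
      have ha := hmax j (Finset.mem_univ _)
      rw [div_le_div_iff₀ (hVpos _) (hVpos _)] at ha
      rw [div_mul_eq_mul_div, le_div_iff₀ (hVpos (i:ℕ))]
      linarith
    have hmv : (Ac.mulVec x) i = ∑ j : Fin N, Ac i j * x j := by
      simp [Matrix.mulVec, dotProduct]
    have hrow := key_row19 lam lam1 mu mu1 s q c R hs2 hq_def hc_def hs0 hmu0 hmu1_0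
      hlam1_0.le hmuq hmu2 hcrux hmu1h hRq hRe N hN (i : ℕ)
    have hrow' : ∑ j : Fin N, Fm19 lam lam1 mu mu1 (i:ℕ) (j:ℕ) * Vw19 lam mu q c (j:ℕ)
        ≤ R * Vw19 lam mu q c (i:ℕ) := by
      rw [Fin.sum_univ_eq_sum_range (fun j => Fm19 lam lam1 mu mu1 (i:ℕ) j * Vw19 lam mu q c j) N]
      exact hrow
    have hnorm : ‖μ'‖ * ‖x i‖ ≤ R * ‖x i‖ := by
      calc ‖μ'‖ * ‖x i‖ = ‖μ' * x i‖ := (norm_mul _ _).symm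
        _ = ‖(μ' • x) i‖ := rfl
        _ = ‖(Ac.mulVec x) i‖ := by rw [hxe]
        _ = ‖∑ j : Fin N, Ac i j * x j‖ := by rw [hmv]
        _ ≤ ∑ j : Fin N, ‖Ac i j * x j‖ := norm_sum_le _ _
        _ = ∑ j : Fin N, Fm19 lam lam1 mu mu1 (i:ℕ) (j:ℕ) * ‖x j‖ := by
            apply Finset.sum_congr rfl
            intro j _
            rw [norm_mul]
            congr 1
            rw [hAc, Matrix.map_apply, Complex.norm_real, Real.norm_eq_abs, hAF i j,
              abs_of_nonneg (hFnn _ _)]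
        _ ≤ ∑ j : Fin N, Fm19 lam lam1 mu mu1 (i:ℕ) (j:ℕ)
              * ((‖x i‖ / Vw19 lam mu q c (i:ℕ)) * Vw19 lam mu q c (j:ℕ)) :=
            Finset.sum_le_sum (fun j _ => mul_le_mul_of_nonneg_left (hcoord j) (hFnn _ _))
        _ = (‖x i‖ / Vw19 lam mu q c (i:ℕ))
              * ∑ j : Fin N, Fm19 lam lam1 mu mu1 (i:ℕ) (j:ℕ) * Vw19 lam mu q c (j:ℕ) := by
            rw [Finset.mul_sum]
            apply Finset.sum_congr rfl
            intro j _; ring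
        _ ≤ (‖x i‖ / Vw19 lam mu q c (i:ℕ)) * (R * Vw19 lam mu q c (i:ℕ)) := by
            exact mul_le_mul_of_nonneg_left hrow'
              (div_nonneg (norm_nonneg _) (hVpos _).le)
        _ = R * ‖x i‖ := by
            rw [show (‖x i‖ / Vw19 lam mu q c (i:ℕ)) * (R * Vw19 lam mu q c (i:ℕ))
                = R * ‖x i‖ * (Vw19 lam mu q c (i:ℕ) / Vw19 lam mu q c (i:ℕ)) by ring,
              div_self (ne_of_gt (hVpos (i:ℕ))), mul_one]
    exact le_of_mul_le_mul_right hnorm hxi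
  refine iSup₂_le fun μ' hμ' => ?_
  rw [show ((‖μ'‖₊ : ℝ≥0∞)) = ENNReal.ofReal ‖μ'‖ from (ENNReal.ofReal_eq_coe_nnreal (norm_nonneg _)).symm]
  exact ENNReal.ofReal_le_ofReal (key μ' hμ')
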